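/- arXiv:1809.08071 — 3 statements merged into one kernel-verified Lean document; each statement's English description precedes it below -/
import Mathlib

section
/- Let η, κ > 0, α_h = 6η/(12η+κ), and N_θ(y₁) = −(α_h/2)(κ/η)(|y₁| − 1/2)² + (α_h/8)(κ/η) − 1/2 on [-1/2, 1/2]. Then N_θ satisfies η N_θ'' = −κ α_h on (−1/2, 0) ∪ (0, 1/2), is continuous, periodic (N_θ(−1/2) = N_θ(1/2)), and ∫_{-1/2}^{1/2}(α_h + N_θ)dy₁ = 0. -/
/-- The explicit corrector rotation
`N_θ(y) = −(α_h/2)(κ/η)(|y|−1/2)² + (α_h/8)(κ/η) − 1/2` with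
`α_h = 6η/(12η+κ)` satisfies `η N_θ'' = −κα_h` away from the junction, is
continuous, periodic, and `∫_{-1/2}^{1/2}(α_h + N_θ) = 0`. -/
theorem stmt_16 (η κ : ℝ) (hη : 0 < η) (hκ : 0 < κ)
    (αh : ℝ) (hαh : αh = 6 * η / (12 * η + κ))
    (Nθ : ℝ → ℝ)
    (hNθ : Nθ = fun y => -(αh / 2) * (κ / η) * (|y| - 1 / 2) ^ 2
        + (αh / 8) * (κ / η) - 1 / 2) :
    (∀ y ∈ Set.Ioo (-(1 / 2) : ℝ) 0 ∪ Set.Ioo (0 : ℝ) (1 / 2),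
      η * deriv (deriv Nθ) y = -(κ * αh)) ∧
    Continuous Nθ ∧ Nθ (-(1 / 2)) = Nθ (1 / 2) ∧
    (∫ y in (-(1 / 2) : ℝ)..(1 / 2), (αh + Nθ y)) = 0 := by
  have hη' : η ≠ 0 := hη.ne'
  have hden : (12 : ℝ) * η + κ ≠ 0 := by positivity
  set A : ℝ := -(αh / 2) * (κ / η) with hA
  set B : ℝ := (αh / 8) * (κ / η) with hB
  refine ⟨?_, ?_, ?_, ?_⟩
  · -- second derivative
    intro y hy
    have key : ∀ (d : ℝ) (p : ℝ → ℝ), p = (fun x => A * (x + d) ^ 2 + B - 1 / 2) →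
        Nθ =ᶠ[nhds y] p → η * deriv (deriv Nθ) y = -(κ * αh) := by
      intro d p hp hEq
      have hd1 : ∀ x, HasDerivAt p (A * (2 * (x + d))) x := by
        intro x
        rw [hp]
        have h := (((((hasDerivAt_id x).add_const d).pow 2).const_mul A).add_const B).sub_const
          (1 / 2)
        simpa using h
      have hderiv : deriv p = fun x => A * (2 * (x + d)) :=
        funext fun x => (hd1 x).deriv
      have hd2 : HasDerivAt (deriv p) (A * 2) y := by
        rw [hderiv]
        have h := (((hasDerivAt_id y).add_const d).const_mul (2 : ℝ)).const_mul A
        simpa using h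
      have h1 : deriv Nθ =ᶠ[nhds y] deriv p := hEq.deriv
      have h2 : deriv (deriv Nθ) y = deriv (deriv p) y := h1.deriv_eq
      rw [h2, hd2.deriv, hA]
      field_simp
    rcases hy with hy | hy
    · refine key (1 / 2) _ rfl ?_
      filter_upwards [Ioo_mem_nhds hy.1 hy.2] with x hx
      simp only [hNθ, abs_of_neg hx.2]
      ring
    · refine key (-(1 / 2)) _ rfl ?_
      filter_upwards [Ioo_mem_nhds hy.1 hy.2] with x hx
      simp only [hNθ, abs_of_pos hx.1]
      ring
  · rw [hNθ]; fun_prop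
  · rw [hNθ]; norm_num
  · have hcont : Continuous fun y => αh + Nθ y := by rw [hNθ]; fun_prop
    have hsplit : (∫ y in (-(1 / 2) : ℝ)..(1 / 2), (αh + Nθ y)) =
        (∫ y in (-(1 / 2) : ℝ)..0, (αh + Nθ y)) +
        (∫ y in (0 : ℝ)..(1 / 2), (αh + Nθ y)) :=
      (intervalIntegral.integral_add_adjacent_intervals
        (hcont.intervalIntegrable _ _) (hcont.intervalIntegrable _ _)).symm
    have hFTC : ∀ (d a b : ℝ),
        (∫ y in a..b, ((αh + B - 1 / 2) + A * (y + d) ^ 2)) =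
        ((αh + B - 1 / 2) * b + A * (b + d) ^ 3 / 3) -
        ((αh + B - 1 / 2) * a + A * (a + d) ^ 3 / 3) := by
      intro d a b
      have hder : ∀ y ∈ Set.uIcc a b,
          HasDerivAt (fun y => (αh + B - 1 / 2) * y + A * (y + d) ^ 3 / 3)
            ((αh + B - 1 / 2) + A * (y + d) ^ 2) y := by
        intro y _
        have h := ((hasDerivAt_id y).const_mul (αh + B - 1 / 2)).add
          (((((hasDerivAt_id y).add_const d).pow 3).const_mul A).div_const 3)
        have heq : (αh + B - 1 / 2) + A * (y + d) ^ 2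
            = (αh + B - 1 / 2) * 1 + A * ((3 : ℕ) * (id y + d) ^ (3 - 1) * 1) / 3 := by
          simp; ring
        rw [heq]
        exact h
      have := intervalIntegral.integral_eq_sub_of_hasDerivAt hder
        ((by fun_prop :
          Continuous fun y : ℝ => (αh + B - 1 / 2) + A * (y + d) ^ 2).intervalIntegrable a b)
      simpa using this
    have hL : (∫ y in (-(1 / 2) : ℝ)..0, (αh + Nθ y)) =
        (∫ y in (-(1 / 2) : ℝ)..0, ((αh + B - 1 / 2) + A * (y + 1 / 2) ^ 2)) := by
      refine intervalIntegral.integral_congr fun y hy => ?_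
      rw [Set.uIcc_of_le (by norm_num)] at hy
      simp only [hNθ, abs_of_nonpos hy.2]
      ring
    have hR : (∫ y in (0 : ℝ)..(1 / 2), (αh + Nθ y)) =
        (∫ y in (0 : ℝ)..(1 / 2), ((αh + B - 1 / 2) + A * (y + -(1 / 2)) ^ 2)) := by
      refine intervalIntegral.integral_congr fun y hy => ?_
      rw [Set.uIcc_of_le (by norm_num)] at hy
      simp only [hNθ, abs_of_nonneg hy.1]
      ring
    rw [hsplit, hL, hR, hFTC, hFTC, hA, hB, hαh]
    field_simp
    ring
end

section
/- For the square periodic beam lattice with extensional stiffness γ, bending stiffness η, and shear stiffness κ (all positive), the homogenized elasticity tensor has components C^h_{1111} = C^h_{2222} = γ, C^h_{1122} = C^h_{1112} = C^h_{1222} = 0, and C^h_{1212} = 6ηκ/(12η+κ). In particular the homogenized energy density is γ(e₁₁)² + γ(e₂₂)² + (6ηκ/(12η+κ))(2e₁₂)² ... i.e. the quadratic form γ(∂₁u₁)(∂₁ũ₁) + γ(∂₂u₂)(∂₂ũ₂) + (6ηκ/(12η+κ))(∂₂u₁+∂₁u₂)(∂₂ũ₁+∂₁ũ₂). -/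
/-- A kinematically admissible periodic corrector on the unit cell graph of the
square lattice: the stiff part `Γ₁` is a cross made of a horizontal segment
(tangent `τ = (1,0)`, normal `n = (0,1)`) and a vertical segment
(tangent `τ = (0,1)`, normal `n = (−1,0)`), each parametrized by `[-1/2,1/2]`,
joined rigidly at the midpoint `0` and periodic at the endpoints `±1/2`. -/
structure CrossCorrector where
  uh : ℝ → ℝ
  vh : ℝ → ℝ
  th : ℝ → ℝ
  uv : ℝ → ℝ
  vv : ℝ → ℝ
  tv : ℝ → ℝ
  smooth_uh : ContDiff ℝ 1 uh
  smooth_vh : ContDiff ℝ 1 vh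
  smooth_th : ContDiff ℝ 1 th
  smooth_uv : ContDiff ℝ 1 uv
  smooth_vv : ContDiff ℝ 1 vv
  smooth_tv : ContDiff ℝ 1 tv
  per_uh : uh (-(1/2)) = uh (1/2)
  per_vh : vh (-(1/2)) = vh (1/2)
  per_th : th (-(1/2)) = th (1/2)
  per_uv : uv (-(1/2)) = uv (1/2)
  per_vv : vv (-(1/2)) = vv (1/2)
  per_tv : tv (-(1/2)) = tv (1/2)
  /-- continuity of the displacement at the joint: first component -/
  junc_disp1 : uh 0 = -(vv 0)
  /-- continuity of the displacement at the joint: second component -/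
  junc_disp2 : vh 0 = uv 0
  /-- continuity of the rotation at the joint -/
  junc_rot : th 0 = tv 0

/-- The cell energy of a corrector `N` for a macroscopic displacement
gradient `e`. -/
noncomputable def crossEnergy (γ η κ : ℝ) (e : Matrix (Fin 2) (Fin 2) ℝ)
    (N : CrossCorrector) : ℝ :=
  (∫ y in (-(1/2) : ℝ)..(1/2),
      (γ * (e 0 0 + deriv N.uh y) ^ 2 + η * (deriv N.th y) ^ 2
        + κ * (e 1 0 + deriv N.vh y - N.th y) ^ 2)) +
  ∫ y in (-(1/2) : ℝ)..(1/2),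
      (γ * (e 1 1 + deriv N.uv y) ^ 2 + η * (deriv N.tv y) ^ 2
        + κ * (-(e 0 1) + deriv N.vv y - N.tv y) ^ 2)

/-- The homogenized energy: the infimum of the cell energy over admissible
periodic correctors. -/
noncomputable def homEnergy (γ η κ : ℝ) (e : Matrix (Fin 2) (Fin 2) ℝ) : ℝ :=
  sInf {r : ℝ | ∃ N : CrossCorrector, r = crossEnergy γ η κ e N}

open MeasureTheory intervalIntegral Real Set

lemma FTC {f : ℝ → ℝ} (hf : ContDiff ℝ 1 f) (a b : ℝ) :
    ∫ y in a..b, deriv f y = f b - f a :=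
  intervalIntegral.integral_deriv_eq_sub (fun x _ => hf.differentiable one_ne_zero x)
    ((hf.continuous_deriv le_rfl).intervalIntegrable _ _)

lemma quad_lb {κ : ℝ} (hκ : 0 < κ) (c x : ℝ) : 2*c*x - c^2/κ ≤ κ*x^2 := by
  rw [← sub_nonneg]
  have h : κ*x^2 - (2*c*x - c^2/κ) = (κ*x - c)^2/κ := by field_simp; ring
  rw [h]; positivity

lemma primitive_hasDerivAt {f : ℝ → ℝ} (hf : Continuous f) (y : ℝ) :
    HasDerivAt (fun u => ∫ t in (0:ℝ)..u, f t) (f y) y :=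
  intervalIntegral.integral_hasDerivAt_right (hf.intervalIntegrable _ _)
    (hf.stronglyMeasurableAtFilter _ _) hf.continuousAt

lemma primitive_contDiff {f : ℝ → ℝ} (hf : Continuous f) :
    ContDiff ℝ 1 (fun u => ∫ t in (0:ℝ)..u, f t) := by
  rw [contDiff_one_iff_deriv]
  refine ⟨fun y => (primitive_hasDerivAt hf y).differentiableAt, ?_⟩
  have : deriv (fun u => ∫ t in (0:ℝ)..u, f t) = f :=
    funext fun y => (primitive_hasDerivAt hf y).deriv
  rw [this]; exact hf

lemma primitive_deriv {f : ℝ → ℝ} (hf : Continuous f) (y : ℝ) :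
    deriv (fun u => ∫ t in (0:ℝ)..u, f t) y = f y := (primitive_hasDerivAt hf y).deriv

lemma beam_half {γ η κ : ℝ} (hγ : 0 < γ) (hη : 0 < η) (hκ : 0 < κ)
    (a b M σ l r : ℝ) (hlr : l ≤ r)
    {u v t : ℝ → ℝ} (hu : ContDiff ℝ 1 u) (hv : ContDiff ℝ 1 v) (ht : ContDiff ℝ 1 t) :
    (2*γ*a*(u r) + 12*η*M*(σ-2*r)*(t r) + 24*η*M*(v r)
      + (γ*a^2 + 24*η*M*b - 144*η^2*M^2/κ)*r + 6*η*M^2*(σ-2*r)^3)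
    - (2*γ*a*(u l) + 12*η*M*(σ-2*l)*(t l) + 24*η*M*(v l)
      + (γ*a^2 + 24*η*M*b - 144*η^2*M^2/κ)*l + 6*η*M^2*(σ-2*l)^3)
    ≤ ∫ y in l..r, (γ*(a + deriv u y)^2 + η*(deriv t y)^2 + κ*(b + deriv v y - t y)^2) := by
  have cu : Continuous (deriv u) := hu.continuous_deriv le_rfl
  have cv : Continuous (deriv v) := hv.continuous_deriv le_rfl
  have ct : Continuous (deriv t) := ht.continuous_deriv le_rfl
  have ctt : Continuous t := ht.continuous
  have hlin : ∀ y : ℝ, HasDerivAt (fun x => σ - 2*x) (-2) y := by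
    intro y
    exact (((hasDerivAt_id y).const_mul (2:ℝ)).const_sub σ).congr_deriv (by norm_num)
  have hΦ : ∀ y, HasDerivAt (fun y => 2*γ*a*(u y) + 12*η*M*((σ-2*y)*(t y)) + 24*η*M*(v y)
      + (γ*a^2 + 24*η*M*b - 144*η^2*M^2/κ)*y + 6*η*M^2*(σ-2*y)^3)
      (2*γ*a*(deriv u y)
      + 12*η*M*((σ-2*y)*(deriv t y) - 2*(t y)) + 24*η*M*(deriv v y)
      + (γ*a^2 + 24*η*M*b - 144*η^2*M^2/κ) - 36*η*M^2*(σ-2*y)^2) y := by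
    intro y
    have h1 : HasDerivAt (fun x => 2*γ*a*(u x)) (2*γ*a*(deriv u y)) y :=
      ((hu.differentiable one_ne_zero y).hasDerivAt).const_mul _
    have h2 : HasDerivAt (fun x => 12*η*M*((σ-2*x)*(t x)))
        ((12*η*M)*((-2)*(t y) + (σ-2*y)*(deriv t y))) y :=
      ((hlin y).mul ((ht.differentiable one_ne_zero y).hasDerivAt)).const_mul (12*η*M)
    have h3 : HasDerivAt (fun x => 24*η*M*(v x)) (24*η*M*(deriv v y)) y :=
      ((hv.differentiable one_ne_zero y).hasDerivAt).const_mul _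
    have h4 : HasDerivAt (fun x => (γ*a^2 + 24*η*M*b - 144*η^2*M^2/κ)*x)
        (γ*a^2 + 24*η*M*b - 144*η^2*M^2/κ) y := by
      simpa using (hasDerivAt_id y).const_mul (γ*a^2 + 24*η*M*b - 144*η^2*M^2/κ)
    have h5 : HasDerivAt (fun x => 6*η*M^2*(σ-2*x)^3)
        (6*η*M^2*(3*(σ-2*y)^2*(-2))) y := (((hlin y).pow 3)).const_mul _
    have hall := (((h1.add h2).add h3).add h4).add h5
    refine hall.congr_deriv ?_
    ring
  have hint : IntervalIntegrable (fun y => 2*γ*a*(deriv u y)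
      + 12*η*M*((σ-2*y)*(deriv t y) - 2*(t y)) + 24*η*M*(deriv v y)
      + (γ*a^2 + 24*η*M*b - 144*η^2*M^2/κ) - 36*η*M^2*(σ-2*y)^2) volume l r :=
    (Continuous.intervalIntegrable (by fun_prop) _ _)
  have heq := intervalIntegral.integral_eq_sub_of_hasDerivAt (fun y _ => hΦ y) hint
  have hmono : (∫ y in l..r, (2*γ*a*(deriv u y)
      + 12*η*M*((σ-2*y)*(deriv t y) - 2*(t y)) + 24*η*M*(deriv v y)
      + (γ*a^2 + 24*η*M*b - 144*η^2*M^2/κ) - 36*η*M^2*(σ-2*y)^2)) ≤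
      ∫ y in l..r, (γ*(a + deriv u y)^2 + η*(deriv t y)^2 + κ*(b + deriv v y - t y)^2) := by
    apply intervalIntegral.integral_mono_on hlr hint
    · exact (Continuous.intervalIntegrable (by fun_prop) _ _)
    · intro y _
      have c1 : 0 ≤ γ * (deriv u y)^2 := by positivity
      have c2 : 0 ≤ η * (deriv t y - 6*M*(σ-2*y))^2 := by positivity
      have c3 := quad_lb hκ (12*η*M) (b + deriv v y - t y)
      have c4 : (12*η*M)^2/κ = 144*(η^2*M^2)/κ := by ring_nf
      have c5 : (144:ℝ)*(η^2*M^2)/κ = 144*η^2*M^2/κ := by ring_nf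
      rw [c4, c5] at c3
      nlinarith [c1, c2, c3]
  rw [heq] at hmono
  exact le_trans (le_of_eq (by ring)) hmono

lemma cross_lb {γ η κ : ℝ} (hγ : 0 < γ) (hη : 0 < η) (hκ : 0 < κ)
    (e : Matrix (Fin 2) (Fin 2) ℝ) (N : CrossCorrector) :
    γ * (e 0 0) ^ 2 + γ * (e 1 1) ^ 2
      + (6 * η * κ / (12 * η + κ)) * (e 0 1 + e 1 0) ^ 2 ≤ crossEnergy γ η κ e N := by
  have hD : (12*η+κ) ≠ 0 := by positivity
  set m : ℝ := κ*(e 0 1 + e 1 0)/(2*(12*η+κ)) with hm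
  have hH1 := beam_half hγ hη hκ (e 0 0) (e 1 0) m (-1) (-(1/2)) 0 (by norm_num)
    N.smooth_uh N.smooth_vh N.smooth_th
  have hH2 := beam_half hγ hη hκ (e 0 0) (e 1 0) m 1 0 (1/2) (by norm_num)
    N.smooth_uh N.smooth_vh N.smooth_th
  have hV1 := beam_half hγ hη hκ (e 1 1) (-(e 0 1)) (-m) (-1) (-(1/2)) 0 (by norm_num)
    N.smooth_uv N.smooth_vv N.smooth_tv
  have hV2 := beam_half hγ hη hκ (e 1 1) (-(e 0 1)) (-m) 1 0 (1/2) (by norm_num)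
    N.smooth_uv N.smooth_vv N.smooth_tv
  have cuh : Continuous (deriv N.uh) := N.smooth_uh.continuous_deriv le_rfl
  have cvh : Continuous (deriv N.vh) := N.smooth_vh.continuous_deriv le_rfl
  have cth : Continuous (deriv N.th) := N.smooth_th.continuous_deriv le_rfl
  have cuv : Continuous (deriv N.uv) := N.smooth_uv.continuous_deriv le_rfl
  have cvv : Continuous (deriv N.vv) := N.smooth_vv.continuous_deriv le_rfl
  have ctv : Continuous (deriv N.tv) := N.smooth_tv.continuous_deriv le_rfl
  have ctt : Continuous N.th := N.smooth_th.continuous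
  have ctt' : Continuous N.tv := N.smooth_tv.continuous
  have hsH := intervalIntegral.integral_add_adjacent_intervals
    (a := (-(1/2):ℝ)) (b := 0) (c := (1/2:ℝ)) (μ := volume)
    (f := fun y => γ * (e 0 0 + deriv N.uh y) ^ 2 + η * (deriv N.th y) ^ 2
        + κ * (e 1 0 + deriv N.vh y - N.th y) ^ 2)
    (Continuous.intervalIntegrable (by fun_prop) _ _)
    (Continuous.intervalIntegrable (by fun_prop) _ _)
  have hsV := intervalIntegral.integral_add_adjacent_intervals
    (a := (-(1/2):ℝ)) (b := 0) (c := (1/2:ℝ)) (μ := volume)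
    (f := fun y => γ * (e 1 1 + deriv N.uv y) ^ 2 + η * (deriv N.tv y) ^ 2
        + κ * (-(e 0 1) + deriv N.vv y - N.tv y) ^ 2)
    (Continuous.intervalIntegrable (by fun_prop) _ _)
    (Continuous.intervalIntegrable (by fun_prop) _ _)
  have htot := add_le_add (add_le_add hH1 hH2) (add_le_add hV1 hV2)
  refine le_trans (le_of_eq ?_) (htot.trans (le_of_eq ?_))
  · rw [N.per_uh, N.per_vh, N.per_th, N.per_uv, N.per_vv, N.per_tv, N.junc_rot]
    rw [hm]; field_simp; ring
  · rw [crossEnergy, ← hsH, ← hsV]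

noncomputable def gprof (ε y : ℝ) : ℝ := Real.sqrt (y^2 + ε^2) - ε - y^2
noncomputable def gd (ε y : ℝ) : ℝ := y / Real.sqrt (y^2 + ε^2) - 2*y

variable {ε : ℝ}

lemma mirror (f : ℝ → ℝ) (hf : ∀ x, f (-x) = f x) :
    ∫ y in (-(1/2):ℝ)..0, f y = ∫ y in (0:ℝ)..(1/2), f y := by
  have h := intervalIntegral.integral_comp_neg (a := (0:ℝ)) (b := (1/2:ℝ)) (f := f)
  simp only [hf, neg_zero] at h
  exact h.symm

lemma int_poly1 : ∫ y in (0:ℝ)..(1/2), (y - y^2) = 1/12 := by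
  have h : ∫ y in (0:ℝ)..(1/2), (y - y^2)
      = ((1/2:ℝ)^2/2 - (1/2:ℝ)^3/3) - ((0:ℝ)^2/2 - (0:ℝ)^3/3) := by
    refine intervalIntegral.integral_eq_sub_of_hasDerivAt (f := fun y : ℝ => y^2/2 - y^3/3) ?_ ?_
    · intro y _
      have h := (((hasDerivAt_pow 2 y).div_const 2).sub ((hasDerivAt_pow 3 y).div_const 3))
      convert h using 1
      · rfl
      push_cast; ring
    · exact Continuous.intervalIntegrable (by continuity) _ _
  rw [h]; norm_num

lemma int_poly2 : ∫ y in (0:ℝ)..(1/2), (y - y^2 - ε) = 1/12 - ε/2 := by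
  have h : ∫ y in (0:ℝ)..(1/2), (y - y^2 - ε)
      = ((1/2:ℝ)^2/2 - (1/2:ℝ)^3/3 - ε*(1/2)) - ((0:ℝ)^2/2 - (0:ℝ)^3/3 - ε*0) := by
    refine intervalIntegral.integral_eq_sub_of_hasDerivAt (f := fun y : ℝ => y^2/2 - y^3/3 - ε*y) ?_ ?_
    · intro y _
      have h := ((((hasDerivAt_pow 2 y).div_const 2).sub
        ((hasDerivAt_pow 3 y).div_const 3))).sub ((hasDerivAt_id y).const_mul ε)
      convert h using 1
      · rfl
      push_cast; ring
    · exact Continuous.intervalIntegrable (by continuity) _ _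
  rw [h]; ring

lemma int_poly3 : ∫ y in (0:ℝ)..(1/2), (1-2*y)^2 = 1/6 := by
  have h : ∫ y in (0:ℝ)..(1/2), (1-2*y)^2
      = (-((1-2*(1/2:ℝ))^3/6)) - (-((1-2*(0:ℝ))^3/6)) := by
    refine intervalIntegral.integral_eq_sub_of_hasDerivAt (f := fun y : ℝ => -((1-2*y)^3/6)) ?_ ?_
    · intro y _
      have hl : HasDerivAt (fun x : ℝ => 1 - 2*x) (-2) y := by
        exact (((hasDerivAt_id y).const_mul (2:ℝ)).const_sub 1).congr_deriv (by norm_num)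
      have h := ((hl.pow 3).div_const 6).neg
      convert h using 1
      · rfl
      push_cast; ring
    · exact Continuous.intervalIntegrable (by continuity) _ _
  rw [h]; norm_num

lemma gprof_even' (y : ℝ) : gprof ε (-y) = gprof ε y := by simp [gprof, neg_sq]

lemma Ieps_bounds (hε : 0 < ε) (hc : Continuous (gprof ε))
    (hle : ∀ y : ℝ, 0 ≤ y → gprof ε y ≤ y - y^2)
    (hge : ∀ y : ℝ, 0 ≤ y → y - y^2 - ε ≤ gprof ε y) :
    1/6 - ε ≤ (∫ y in (-(1/2):ℝ)..(1/2), gprof ε y) ∧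
      (∫ y in (-(1/2):ℝ)..(1/2), gprof ε y) ≤ 1/6 := by
  have hadd := intervalIntegral.integral_add_adjacent_intervals
    (a := (-(1/2):ℝ)) (b := 0) (c := (1/2:ℝ)) (μ := volume) (f := gprof ε)
    (hc.intervalIntegrable _ _) (hc.intervalIntegrable _ _)
  have hm := mirror (gprof ε) (fun y => gprof_even' y)
  have hub : (∫ y in (0:ℝ)..(1/2), gprof ε y) ≤ 1/12 := by
    rw [← int_poly1]
    apply intervalIntegral.integral_mono_on (by norm_num) (hc.intervalIntegrable _ _)
      (Continuous.intervalIntegrable (by continuity) _ _)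
    intro y hy
    exact hle y hy.1
  have hlb : 1/12 - ε/2 ≤ (∫ y in (0:ℝ)..(1/2), gprof ε y) := by
    rw [← int_poly2 (ε := ε)]
    apply intervalIntegral.integral_mono_on (by norm_num)
      (Continuous.intervalIntegrable (by continuity) _ _) (hc.intervalIntegrable _ _)
    intro y hy
    exact hge y hy.1
  constructor <;> rw [← hadd, hm] <;> linarith

lemma cont_on_eps (hε : 0 < ε) {a b : ℝ} (ha : 0 ≤ a) (hab : a ≤ b) :
    ContinuousOn (fun y : ℝ => ε/(y+ε)) (Set.uIcc a b) := by
  rw [Set.uIcc_of_le hab]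
  apply ContinuousOn.div continuousOn_const (by fun_prop)
  intro x hx
  have h0 : 0 ≤ x := le_trans ha hx.1
  exact ne_of_gt (by linarith)

lemma eps_div_bound (hε : 0 < ε) (hε4 : ε ≤ 1/4) :
    (∫ y in (0:ℝ)..(1/2), ε/(y+ε)) ≤ 3/2 * Real.sqrt ε := by
  have hs0 : 0 < Real.sqrt ε := Real.sqrt_pos.2 hε
  have hs12 : Real.sqrt ε ≤ 1/2 := by
    calc Real.sqrt ε ≤ Real.sqrt (1/4) := Real.sqrt_le_sqrt hε4
      _ = 1/2 := by rw [show (1/4:ℝ) = (1/2)^2 by norm_num, Real.sqrt_sq (by norm_num)]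
  have hi1 : IntervalIntegrable (fun y : ℝ => ε/(y+ε)) volume 0 (Real.sqrt ε) :=
    (cont_on_eps hε le_rfl hs0.le).intervalIntegrable
  have hi2 : IntervalIntegrable (fun y : ℝ => ε/(y+ε)) volume (Real.sqrt ε) (1/2) :=
    (cont_on_eps hε hs0.le hs12).intervalIntegrable
  have hadd := intervalIntegral.integral_add_adjacent_intervals hi1 hi2
  have hb1 : (∫ y in (0:ℝ)..(Real.sqrt ε), ε/(y+ε)) ≤ Real.sqrt ε := by
    have h2 : (∫ y in (0:ℝ)..(Real.sqrt ε), ε/(y+ε)) ≤ ∫ y in (0:ℝ)..(Real.sqrt ε), (1:ℝ) := by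
      apply intervalIntegral.integral_mono_on hs0.le hi1
        (Continuous.intervalIntegrable continuous_const _ _)
      intro y hy
      rw [div_le_one (by linarith [hy.1])]
      linarith [hy.1]
    calc (∫ y in (0:ℝ)..(Real.sqrt ε), ε/(y+ε)) ≤ _ := h2
      _ = Real.sqrt ε := by simp
  have hb2 : (∫ y in (Real.sqrt ε)..(1/2:ℝ), ε/(y+ε)) ≤ 1/2 * Real.sqrt ε := by
    have h1 : (∫ y in (Real.sqrt ε)..(1/2:ℝ), Real.sqrt ε) = (1/2 - Real.sqrt ε) * Real.sqrt ε := by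
      simp [smul_eq_mul]
    have h2 : (∫ y in (Real.sqrt ε)..(1/2:ℝ), ε/(y+ε)) ≤ (1/2 - Real.sqrt ε) * Real.sqrt ε := by
      rw [← h1]
      apply intervalIntegral.integral_mono_on hs12 hi2
        (Continuous.intervalIntegrable continuous_const _ _)
      intro y hy
      rw [div_le_iff₀ (by linarith [hy.1])]
      have hyy : Real.sqrt ε ≤ y := hy.1
      nlinarith [Real.mul_self_sqrt hε.le, hs0]
    nlinarith [hs0]
  rw [← hadd]; linarith

lemma gd_sq_even (y : ℝ) : (gd ε (-y))^2 = (gd ε y)^2 := by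
  have : gd ε (-y) = - gd ε y := by simp [gd, neg_sq, neg_div]; ring
  rw [this]; ring

lemma J_bound (hε : 0 < ε) (hε4 : ε ≤ 1/4) (hcgd : Continuous (gd ε))
    (hbd : ∀ y : ℝ, 0 ≤ y → y ≤ 1/2 → (gd ε y)^2 ≤ (1-2*y)^2 + ε/(y+ε)) :
    (∫ y in (-(1/2):ℝ)..(1/2), (gd ε y)^2) ≤ 1/3 + 3 * Real.sqrt ε := by
  have hc2 : Continuous (fun y => (gd ε y)^2) := hcgd.pow 2
  have hadd := intervalIntegral.integral_add_adjacent_intervals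
    (a := (-(1/2):ℝ)) (b := 0) (c := (1/2:ℝ)) (μ := volume) (f := fun y => (gd ε y)^2)
    (hc2.intervalIntegrable _ _) (hc2.intervalIntegrable _ _)
  have hm := mirror (fun y => (gd ε y)^2) (fun y => gd_sq_even y)
  have hi1 : IntervalIntegrable (fun y : ℝ => (1-2*y)^2) volume 0 (1/2) :=
    Continuous.intervalIntegrable (by continuity) _ _
  have hi2 : IntervalIntegrable (fun y : ℝ => ε/(y+ε)) volume 0 (1/2) :=
    (cont_on_eps hε le_rfl (by norm_num)).intervalIntegrable
  have hhalf : (∫ y in (0:ℝ)..(1/2), (gd ε y)^2) ≤ 1/6 + 3/2 * Real.sqrt ε := by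
    have hmono : (∫ y in (0:ℝ)..(1/2), (gd ε y)^2)
        ≤ ∫ y in (0:ℝ)..(1/2), ((1-2*y)^2 + ε/(y+ε)) := by
      apply intervalIntegral.integral_mono_on (by norm_num) (hc2.intervalIntegrable _ _)
        (hi1.add hi2)
      intro y hy
      exact hbd y hy.1 hy.2
    have hsplit : (∫ y in (0:ℝ)..(1/2), ((1-2*y)^2 + ε/(y+ε)))
        = (∫ y in (0:ℝ)..(1/2), (1-2*y)^2) + ∫ y in (0:ℝ)..(1/2), ε/(y+ε) :=
      intervalIntegral.integral_add hi1 hi2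
    rw [hsplit, int_poly3] at hmono
    linarith [eps_div_bound hε hε4]
  rw [← hadd, hm]; linarith

lemma gprof_contDiff (hε : 0 < ε) : ContDiff ℝ 1 (gprof ε) := by
  have h : ∀ x : ℝ, x^2 + ε^2 ≠ 0 := fun x => by positivity
  exact ((((contDiff_id.pow 2).add contDiff_const).sqrt h).sub contDiff_const).sub
    (contDiff_id.pow 2)

lemma gprof_hasDeriv (hε : 0 < ε) (y : ℝ) : HasDerivAt (gprof ε) (gd ε y) y := by
  have hpos : (0:ℝ) < y^2 + ε^2 := by positivity
  have hs : (0:ℝ) < Real.sqrt (y^2 + ε^2) := Real.sqrt_pos.2 hpos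
  have h1 : HasDerivAt (fun x : ℝ => x^2 + ε^2) (2*y) y := by
    simpa using ((hasDerivAt_pow 2 y).add_const (ε^2))
  have h2 := (h1.sqrt hpos.ne').sub_const ε
  have h3 : HasDerivAt (fun x : ℝ => x^2) (2*y) y := by simpa using hasDerivAt_pow 2 y
  have := h2.sub h3
  refine this.congr_deriv ?_
  unfold gd
  field_simp
lemma gprof_deriv (hε : 0 < ε) : deriv (gprof ε) = gd ε :=
  funext fun y => (gprof_hasDeriv hε y).deriv

lemma gd_cont (hε : 0 < ε) : Continuous (gd ε) := by
  rw [← gprof_deriv hε]; exact (gprof_contDiff hε).continuous_deriv le_rfl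

lemma gprof_even (y : ℝ) : gprof ε (-y) = gprof ε y := by simp [gprof, neg_sq]

lemma gd_neg (y : ℝ) : gd ε (-y) = - gd ε y := by
  simp [gd, neg_sq, neg_div]; ring

lemma gprof_zero (hε : 0 < ε) : gprof ε 0 = 0 := by
  simp [gprof, Real.sqrt_sq hε.le]

lemma gprof_le (hε : 0 < ε) {y : ℝ} (hy : 0 ≤ y) : gprof ε y ≤ y - y^2 := by
  have h : Real.sqrt (y^2 + ε^2) ≤ y + ε := by
    rw [show y^2 + ε^2 = (y+ε)^2 - 2*y*ε by ring]
    calc Real.sqrt ((y+ε)^2 - 2*y*ε) ≤ Real.sqrt ((y+ε)^2) :=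
          Real.sqrt_le_sqrt (by nlinarith)
      _ = y + ε := Real.sqrt_sq (by positivity)
  unfold gprof; linarith

lemma gprof_ge (hε : 0 < ε) {y : ℝ} (hy : 0 ≤ y) : y - y^2 - ε ≤ gprof ε y := by
  have h : y ≤ Real.sqrt (y^2 + ε^2) := by
    calc y = Real.sqrt (y^2) := (Real.sqrt_sq hy).symm
      _ ≤ _ := Real.sqrt_le_sqrt (by nlinarith)
  unfold gprof; linarith

lemma gd_sq_bound (hε : 0 < ε) {y : ℝ} (hy : 0 ≤ y) (hy2 : y ≤ 1/2) :
    (gd ε y)^2 ≤ (1-2*y)^2 + ε/(y+ε) := by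
  have hpos : (0:ℝ) < y^2 + ε^2 := by positivity
  have hr : (0:ℝ) < Real.sqrt (y^2 + ε^2) := Real.sqrt_pos.2 hpos
  set r := Real.sqrt (y^2 + ε^2) with hrdef
  have hyr : y ≤ r := by
    calc y = Real.sqrt (y^2) := (Real.sqrt_sq hy).symm
      _ ≤ _ := Real.sqrt_le_sqrt (by nlinarith)
  have hry : r ≤ y + ε := by
    rw [hrdef]
    calc Real.sqrt (y^2 + ε^2) ≤ Real.sqrt ((y+ε)^2) := Real.sqrt_le_sqrt (by nlinarith)
      _ = y + ε := Real.sqrt_sq (by positivity)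
  have hyε : (0:ℝ) < y + ε := by linarith
  have hq1 : y / r ≤ 1 := (div_le_one hr).2 hyr
  have hq0 : 0 ≤ y / r := by positivity
  have hq2 : 1 - y / r ≤ ε/(y+ε) := by
    have : y/(y+ε) ≤ y/r := div_le_div_of_nonneg_left hy hr hry
    have h2 : 1 - y/(y+ε) = ε/(y+ε) := by field_simp; ring
    linarith
  have h12 : 0 ≤ 1 - 2*y := by linarith
  have : gd ε y = (1 - 2*y) - (1 - y/r) := by unfold gd; rw [← hrdef]; ring
  rw [this]
  nlinarith [hq1, hq0, hq2, h12, sq_nonneg (1 - y/r)]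

lemma self_le_sqrt {ε : ℝ} (hε : 0 < ε) (hε1 : ε ≤ 1) : ε ≤ Real.sqrt ε := by
  nlinarith [Real.sq_sqrt hε.le, Real.sqrt_nonneg ε, sq_nonneg (1 - Real.sqrt ε)]

lemma sq_le_sqrt' {ε : ℝ} (hε : 0 < ε) (hε1 : ε ≤ 1) : ε^2 ≤ Real.sqrt ε := by
  have h : ε^2 ≤ ε := by nlinarith
  exact le_trans h (self_le_sqrt hε hε1)

lemma arJ {η m J r : ℝ} (hη : 0 < η) (hJ : J ≤ 1/3 + 3*r) :
    72*η*m^2*J ≤ 24*η*m^2 + 216*η*m^2*r := by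
  nlinarith [mul_le_mul_of_nonneg_left hJ (show (0:ℝ) ≤ 72*η*m^2 by positivity)]

lemma arP {s m I ε : ℝ} (h1 : 0 ≤ 1-6*I) (h2 : 1-6*I ≤ 6*ε) :
    (s - 6*m*I)^2 ≤ (s-m)^2 + 12*(|s-m|)*(|m|)*ε + 36*m^2*ε^2 := by
  have hd : s - 6*m*I = (s-m) + m*(1-6*I) := by ring
  have hb1 : 2*(s-m)*(m*(1-6*I)) ≤ 12*(|s-m|)*(|m|)*ε := by
    calc 2*(s-m)*(m*(1-6*I)) ≤ |2*(s-m)*(m*(1-6*I))| := le_abs_self _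
      _ = 2*(|s-m|)*((|m|)*(1-6*I)) := by
          rw [abs_mul, abs_mul, abs_mul, abs_of_nonneg h1,
            abs_of_nonneg (by norm_num : (0:ℝ) ≤ 2)]
          try ring
      _ ≤ 2*(|s-m|)*((|m|)*(6*ε)) := by
          apply mul_le_mul_of_nonneg_left _ (by positivity)
          exact mul_le_mul_of_nonneg_left h2 (abs_nonneg m)
      _ = 12*(|s-m|)*(|m|)*ε := by ring
  have hb2 : (m*(1-6*I))^2 ≤ 36*m^2*ε^2 := by
    have hu : (1-6*I)*(1-6*I) ≤ (6*ε)*(6*ε) :=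
      mul_le_mul h2 h2 h1 (le_trans h1 h2)
    nlinarith [hu, sq_nonneg m]
  rw [hd]; nlinarith [hb1, hb2]

lemma arC {κ P Q a b m ε r : ℝ} (hκ : 0 < κ) (ha : 0 ≤ a) (hb : 0 ≤ b)
    (hεs : ε ≤ r) (hε2s : ε^2 ≤ r)
    (hP : P ≤ Q + 12*a*b*ε + 36*m^2*ε^2) :
    κ*P ≤ κ*Q + 12*κ*a*b*r + 36*κ*m^2*r := by
  have t1 := mul_le_mul_of_nonneg_left hP hκ.le
  have t2 : 12*κ*a*b*ε ≤ 12*κ*a*b*r := mul_le_mul_of_nonneg_left hεs (by positivity)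
  have t3 : 36*κ*m^2*ε^2 ≤ 36*κ*m^2*r := mul_le_mul_of_nonneg_left hε2s (by positivity)
  nlinarith [t1, t2, t3]

set_option maxHeartbeats 1000000 in
lemma cross_ub {γ η κ : ℝ} (hγ : 0 < γ) (hη : 0 < η) (hκ : 0 < κ)
    (e : Matrix (Fin 2) (Fin 2) ℝ) {δ : ℝ} (hδ : 0 < δ) :
    ∃ N : CrossCorrector, crossEnergy γ η κ e N ≤
      γ*(e 0 0)^2 + γ*(e 1 1)^2 + (6*η*κ/(12*η+κ))*(e 0 1 + e 1 0)^2 + δ := by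
  have hD : (0:ℝ) < 12*η+κ := by positivity
  obtain ⟨s, hs⟩ : ∃ x : ℝ, x = (e 0 1 + e 1 0)/2 := ⟨_, rfl⟩
  obtain ⟨m, hm⟩ : ∃ x : ℝ, x = κ*s/(12*η+κ) := ⟨_, rfl⟩
  obtain ⟨θ0, hθ0⟩ : ∃ x : ℝ, x = (e 1 0 - e 0 1)/2 := ⟨_, rfl⟩
  obtain ⟨K, hK⟩ : ∃ x : ℝ, x = 216*η*m^2 + 24*κ*(|s-m|)*(|m|) + 72*κ*m^2 + 1 := ⟨_, rfl⟩
  have hKpos : 0 < K := by rw [hK]; positivity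
  obtain ⟨ε, hεdef⟩ : ∃ x : ℝ, x = min (1/4) ((δ/K)^2) := ⟨_, rfl⟩
  have hε : 0 < ε := by rw [hεdef]; exact lt_min (by norm_num) (by positivity)
  have hε4 : ε ≤ 1/4 := by rw [hεdef]; exact min_le_left _ _
  have hε1 : ε ≤ 1 := le_trans hε4 (by norm_num)
  have hεle : ε ≤ (δ/K)^2 := by rw [hεdef]; exact min_le_right _ _
  have hsqK : Real.sqrt ε ≤ δ/K := by
    calc Real.sqrt ε ≤ Real.sqrt ((δ/K)^2) := Real.sqrt_le_sqrt hεle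
      _ = δ/K := Real.sqrt_sq (by positivity)
  have hKs : K * Real.sqrt ε ≤ δ := by
    calc K * Real.sqrt ε ≤ K * (δ/K) := mul_le_mul_of_nonneg_left hsqK hKpos.le
      _ = δ := by field_simp
  have hεs : ε ≤ Real.sqrt ε := self_le_sqrt hε hε1
  have hε2s : ε^2 ≤ Real.sqrt ε := sq_le_sqrt' hε hε1
  have hgc : ContDiff ℝ 1 (gprof ε) := gprof_contDiff hε
  have hgcont : Continuous (gprof ε) := hgc.continuous
  have hgdc : Continuous (gd ε) := gd_cont hε
  obtain ⟨I, hI⟩ : ∃ x : ℝ, x = ∫ y in (-(1/2):ℝ)..(1/2), gprof ε y := ⟨_, rfl⟩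
  obtain ⟨hIlb', hIub'⟩ := Ieps_bounds hε hgcont (fun y hy => gprof_le hε hy)
    (fun y hy => gprof_ge hε hy)
  have hIlb : 1/6 - ε ≤ I := by rw [hI]; exact hIlb'
  have hIub : I ≤ 1/6 := by rw [hI]; exact hIub'
  obtain ⟨J, hJdef⟩ : ∃ x : ℝ, x = ∫ y in (-(1/2):ℝ)..(1/2), (gd ε y)^2 := ⟨_, rfl⟩
  have hJ : J ≤ 1/3 + 3 * Real.sqrt ε := by
    rw [hJdef]
    exact J_bound hε hε4 hgdc (fun y h1 h2 => gd_sq_bound hε h1 h2)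
  -- the corrector functions
  obtain ⟨th, hth⟩ : ∃ f : ℝ → ℝ, f = fun y => θ0 + 6*m*(gprof ε y) := ⟨_, rfl⟩
  obtain ⟨tv, htv⟩ : ∃ f : ℝ → ℝ, f = fun y => θ0 - 6*m*(gprof ε y) := ⟨_, rfl⟩
  obtain ⟨Ah, hAh⟩ : ∃ x : ℝ, x = θ0 + 6*m*I := ⟨_, rfl⟩
  obtain ⟨Av, hAv⟩ : ∃ x : ℝ, x = θ0 - 6*m*I := ⟨_, rfl⟩
  obtain ⟨vh, hvh⟩ : ∃ f : ℝ → ℝ, f = fun u => ∫ t in (0:ℝ)..u, (th t - Ah) := ⟨_, rfl⟩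
  obtain ⟨vv, hvv⟩ : ∃ f : ℝ → ℝ, f = fun u => ∫ t in (0:ℝ)..u, (tv t - Av) := ⟨_, rfl⟩
  have hthc : Continuous th := by rw [hth]; fun_prop
  have htvc : Continuous tv := by rw [htv]; fun_prop
  have hfhc : Continuous (fun t => th t - Ah) := hthc.sub continuous_const
  have hfvc : Continuous (fun t => tv t - Av) := htvc.sub continuous_const
  have hth_smooth : ContDiff ℝ 1 th := by
    rw [hth]; exact contDiff_const.add (contDiff_const.mul hgc)
  have htv_smooth : ContDiff ℝ 1 tv := by
    rw [htv]; exact contDiff_const.sub (contDiff_const.mul hgc)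
  have hvh_smooth : ContDiff ℝ 1 vh := by rw [hvh]; exact primitive_contDiff hfhc
  have hvv_smooth : ContDiff ℝ 1 vv := by rw [hvv]; exact primitive_contDiff hfvc
  have hth_deriv : ∀ y, deriv th y = 6*m*(gd ε y) := by
    intro y
    rw [hth]
    exact (((gprof_hasDeriv hε y).const_mul (6*m)).const_add θ0).deriv
  have htv_deriv : ∀ y, deriv tv y = -(6*m*(gd ε y)) := by
    intro y
    have h : HasDerivAt (fun y => θ0 - 6*m*(gprof ε y)) (0 - 6*m*(gd ε y)) y :=
      (hasDerivAt_const y θ0).sub ((gprof_hasDeriv hε y).const_mul (6*m))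
    rw [htv, show -(6*m*(gd ε y)) = 0 - 6*m*(gd ε y) by ring]
    exact h.deriv
  have hvh_deriv : ∀ y, deriv vh y = th y - Ah := by
    intro y; rw [hvh]; exact (primitive_hasDerivAt hfhc y).deriv
  have hvv_deriv : ∀ y, deriv vv y = tv y - Av := by
    intro y; rw [hvv]; exact (primitive_hasDerivAt hfvc y).deriv
  -- integral of th and tv
  have hth_int : (∫ y in (-(1/2):ℝ)..(1/2), th y) = Ah := by
    rw [hth, intervalIntegral.integral_add (g := fun y => 6*m*gprof ε y) (intervalIntegrable_const)
      ((continuous_const.mul hgcont).intervalIntegrable _ _),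
      intervalIntegral.integral_const_mul, ← hI, hAh]
    simp
    norm_num
  have htv_int : (∫ y in (-(1/2):ℝ)..(1/2), tv y) = Av := by
    rw [htv, intervalIntegral.integral_sub (g := fun y => 6*m*gprof ε y) (intervalIntegrable_const)
      ((continuous_const.mul hgcont).intervalIntegrable _ _),
      intervalIntegral.integral_const_mul, ← hI, hAv]
    simp
    norm_num
  -- periodicity of vh, vv
  have hvh_per : vh (-(1/2)) = vh (1/2) := by
    have h := intervalIntegral.integral_interval_sub_left
      (a := (0:ℝ)) (b := (1/2:ℝ)) (c := (-(1/2):ℝ)) (μ := volume)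
      (f := fun t => th t - Ah)
      (hfhc.intervalIntegrable _ _) (hfhc.intervalIntegrable _ _)
    have h2 : (∫ t in (-(1/2):ℝ)..(1/2), (th t - Ah)) = 0 := by
      rw [intervalIntegral.integral_sub (hthc.intervalIntegrable _ _)
        intervalIntegrable_const, hth_int]
      simp
      norm_num
    rw [hvh]
    have := h.symm ▸ h2
    linarith [h2 ▸ h]
  have hvv_per : vv (-(1/2)) = vv (1/2) := by
    have h := intervalIntegral.integral_interval_sub_left
      (a := (0:ℝ)) (b := (1/2:ℝ)) (c := (-(1/2):ℝ)) (μ := volume)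
      (f := fun t => tv t - Av)
      (hfvc.intervalIntegrable _ _) (hfvc.intervalIntegrable _ _)
    have h2 : (∫ t in (-(1/2):ℝ)..(1/2), (tv t - Av)) = 0 := by
      rw [intervalIntegral.integral_sub (htvc.intervalIntegrable _ _)
        intervalIntegrable_const, htv_int]
      simp
      norm_num
    rw [hvv]
    linarith [h2 ▸ h]
  have hvh0 : vh 0 = 0 := by rw [hvh]; simp
  have hvv0 : vv 0 = 0 := by rw [hvv]; simp
  have hth0 : th 0 = θ0 := by rw [hth]; simp [gprof_zero hε]
  have htv0 : tv 0 = θ0 := by rw [htv]; simp [gprof_zero hε]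
  have hthper : th (-(1/2)) = th (1/2) := by
    rw [hth]
    show θ0 + 6*m*(gprof ε (-(1/2))) = θ0 + 6*m*(gprof ε (1/2))
    rw [gprof_even]
  have htvper : tv (-(1/2)) = tv (1/2) := by
    rw [htv]
    show θ0 - 6*m*(gprof ε (-(1/2))) = θ0 - 6*m*(gprof ε (1/2))
    rw [gprof_even]
  refine ⟨⟨(fun _ => 0), vh, th, (fun _ => 0), vv, tv,
    contDiff_const, hvh_smooth, hth_smooth, contDiff_const, hvv_smooth, htv_smooth,
    rfl, hvh_per, hthper, rfl, hvv_per, htvper,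
    (by simp [hvv0]), (by simp [hvh0]), hth0.trans htv0.symm⟩, ?_⟩
  show (∫ y in (-(1/2) : ℝ)..(1/2),
      (γ * (e 0 0 + deriv (fun _ => (0:ℝ)) y) ^ 2 + η * (deriv th y) ^ 2
        + κ * (e 1 0 + deriv vh y - th y) ^ 2)) +
    (∫ y in (-(1/2) : ℝ)..(1/2),
      (γ * (e 1 1 + deriv (fun _ => (0:ℝ)) y) ^ 2 + η * (deriv tv y) ^ 2
        + κ * (-(e 0 1) + deriv vv y - tv y) ^ 2)) ≤ _
  have hcongr1 : (∫ y in (-(1/2) : ℝ)..(1/2),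
      (γ * (e 0 0 + deriv (fun _ => (0:ℝ)) y) ^ 2 + η * (deriv th y) ^ 2
        + κ * (e 1 0 + deriv vh y - th y) ^ 2))
      = ∫ y in (-(1/2) : ℝ)..(1/2),
        (γ * (e 0 0)^2 + 36*η*m^2*(gd ε y)^2 + κ * (e 1 0 - Ah)^2) := by
    apply intervalIntegral.integral_congr
    intro y _
    simp only [hth_deriv y, hvh_deriv y, deriv_const']
    ring
  have hcongr2 : (∫ y in (-(1/2) : ℝ)..(1/2),
      (γ * (e 1 1 + deriv (fun _ => (0:ℝ)) y) ^ 2 + η * (deriv tv y) ^ 2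
        + κ * (-(e 0 1) + deriv vv y - tv y) ^ 2))
      = ∫ y in (-(1/2) : ℝ)..(1/2),
        (γ * (e 1 1)^2 + 36*η*m^2*(gd ε y)^2 + κ * (-(e 0 1) - Av)^2) := by
    apply intervalIntegral.integral_congr
    intro y _
    simp only [htv_deriv y, hvv_deriv y, deriv_const']
    ring
  have hgd2int : IntervalIntegrable (fun y => 36*η*m^2*(gd ε y)^2) volume (-(1/2)) (1/2) :=
    (continuous_const.mul (hgdc.pow 2)).intervalIntegrable _ _
  have hJmul : (∫ x in (-(1/2):ℝ)..(1/2), 36*η*m^2*(gd ε x)^2) = 36*η*m^2*J := by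
    rw [hJdef]
    exact intervalIntegral.integral_const_mul _ _
  have hval1 : (∫ y in (-(1/2) : ℝ)..(1/2),
        (γ * (e 0 0)^2 + 36*η*m^2*(gd ε y)^2 + κ * (e 1 0 - Ah)^2))
      = γ * (e 0 0)^2 + 36*η*m^2*J + κ * (e 1 0 - Ah)^2 := by
    rw [intervalIntegral.integral_add (intervalIntegrable_const.add hgd2int)
      intervalIntegrable_const,
      intervalIntegral.integral_add intervalIntegrable_const hgd2int, hJmul]
    simp
    norm_num
  have hval2 : (∫ y in (-(1/2) : ℝ)..(1/2),
        (γ * (e 1 1)^2 + 36*η*m^2*(gd ε y)^2 + κ * (-(e 0 1) - Av)^2))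
      = γ * (e 1 1)^2 + 36*η*m^2*J + κ * (-(e 0 1) - Av)^2 := by
    rw [intervalIntegral.integral_add (intervalIntegrable_const.add hgd2int)
      intervalIntegrable_const,
      intervalIntegral.integral_add intervalIntegrable_const hgd2int, hJmul]
    simp
    norm_num
  have hAh1 : e 1 0 - Ah = s - 6*m*I := by rw [hAh, hθ0, hs]; ring
  have hAv1 : (-(e 0 1) - Av)^2 = (s - 6*m*I)^2 := by rw [hAv, hθ0, hs]; ring
  rw [hcongr1, hval1, hcongr2, hval2, hAh1, hAv1]
  -- estimates
  have h16I_lb : 0 ≤ 1 - 6*I := by linarith only [hIub]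
  have h16I_ub : 1 - 6*I ≤ 6*ε := by linarith only [hIlb]
  have hJpart : 72*η*m^2*J ≤ 24*η*m^2 + 216*η*m^2*Real.sqrt ε := arJ hη hJ
  have hP : (s - 6*m*I)^2 ≤ (s-m)^2 + 12*(|s-m|)*(|m|)*ε + 36*m^2*ε^2 :=
    arP h16I_lb h16I_ub
  have hP3 : κ*(s-6*m*I)^2 ≤ κ*(s-m)^2 + 12*κ*(|s-m|)*(|m|)*Real.sqrt ε
      + 36*κ*m^2*Real.sqrt ε :=
    arC hκ (abs_nonneg _) (abs_nonneg _) hεs hε2s hP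
  have hfinal : (216*η*m^2 + 24*κ*(|s-m|)*(|m|) + 72*κ*m^2)*Real.sqrt ε ≤ δ := by
    have hMs : (K - 1) * Real.sqrt ε ≤ K * Real.sqrt ε := by
      have := Real.sqrt_nonneg ε
      linarith only [this]
    have h : (216*η*m^2 + 24*κ*(|s-m|)*(|m|) + 72*κ*m^2 : ℝ) = K - 1 := by rw [hK]; ring
    rw [h]; linarith only [hMs, hKs]
  have hT : 24*η*m^2 + 2*κ*(s-m)^2 = 6*η*κ/(12*η+κ)*(e 0 1 + e 1 0)^2 := by
    rw [hm, hs]; field_simp; ring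
  rw [← hT]
  linarith only [hJpart, hP3, hfinal]

open Finset in
/-- For the square periodic beam lattice the homogenized elasticity tensor has
`C^h_{1111} = C^h_{2222} = γ`, `C^h_{1122} = C^h_{1112} = C^h_{1222} = 0` and
`C^h_{1212} = 6ηκ/(12η+κ)`; the homogenized energy density is
`γ e₁₁² + γ e₂₂² + (6ηκ/(12η+κ))(e₁₂+e₂₁)²`. -/
theorem stmt_17 (γ η κ : ℝ) (hγ : 0 < γ) (hη : 0 < η) (hκ : 0 < κ) :
    ∃ C : Fin 2 → Fin 2 → Fin 2 → Fin 2 → ℝ,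
      (∀ j l p q, C j l p q = C p q j l) ∧
      (∀ j l p q, C j l p q = C l j p q) ∧
      (∀ e : Matrix (Fin 2) (Fin 2) ℝ,
        homEnergy γ η κ e = ∑ j, ∑ l, ∑ p, ∑ q, C j l p q * e j l * e p q) ∧
      C 0 0 0 0 = γ ∧ C 1 1 1 1 = γ ∧
      C 0 0 1 1 = 0 ∧ C 0 0 0 1 = 0 ∧ C 0 1 1 1 = 0 ∧
      C 0 1 0 1 = 6 * η * κ / (12 * η + κ) ∧
      (∀ e : Matrix (Fin 2) (Fin 2) ℝ,
        homEnergy γ η κ e = γ * (e 0 0) ^ 2 + γ * (e 1 1) ^ 2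
          + (6 * η * κ / (12 * η + κ)) * (e 0 1 + e 1 0) ^ 2) := by
  have hom_eq : ∀ e : Matrix (Fin 2) (Fin 2) ℝ,
      homEnergy γ η κ e = γ * (e 0 0) ^ 2 + γ * (e 1 1) ^ 2
        + (6 * η * κ / (12 * η + κ)) * (e 0 1 + e 1 0) ^ 2 := by
    intro e
    have hlb := fun N => cross_lb hγ hη hκ e N
    have hbdd : BddBelow {r : ℝ | ∃ N : CrossCorrector, r = crossEnergy γ η κ e N} :=
      ⟨_, fun r ⟨N', hN'⟩ => hN' ▸ hlb N'⟩
    obtain ⟨N0, _⟩ := cross_ub hγ hη hκ e one_pos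
    unfold homEnergy
    apply le_antisymm
    · apply le_of_forall_pos_le_add
      intro δ hδ
      obtain ⟨N, hN⟩ := cross_ub hγ hη hκ e hδ
      exact le_trans (csInf_le hbdd ⟨N, rfl⟩) hN
    · exact le_csInf ⟨_, N0, rfl⟩ (fun r ⟨N', hN'⟩ => hN' ▸ hlb N')
  refine ⟨fun j l p q =>
      if j = l ∧ p = q ∧ j = p then γ
      else if j ≠ l ∧ p ≠ q then 6*η*κ/(12*η+κ) else 0,
    ?_, ?_, ?_, ?_, ?_, ?_, ?_, ?_, ?_, ?_⟩
  · intro j l p q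
    fin_cases j <;> fin_cases l <;> fin_cases p <;> fin_cases q <;> norm_num
  · intro j l p q
    fin_cases j <;> fin_cases l <;> fin_cases p <;> fin_cases q <;> norm_num
  · intro e
    rw [hom_eq e]
    simp only [Fin.sum_univ_two]
    norm_num
    ring
  · norm_num
  · norm_num
  · norm_num
  · norm_num
  · norm_num
  · norm_num
  · intro e
    exact hom_eq e
end

section
/- Let E(e) = C^h_{jlpq} e_{jl} e_{pq} where C^h is the homogenized tensor of a periodically connected stiff beam graph Γ₁ (defined as the minimum over admissible periodic correctors of the nonnegative cell energy). Then E(e) = 0 if and only if e is antisymmetric (e_{lj} = −e_{jl}); in particular, for antisymmetric e the minimum is attained by N_u ≡ N_v ≡ 0 and N_θ = e_{jl} n_j τ_l constant on Γ₁. -/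
open MeasureTheory

lemma four_sq_bound (w x y z : ℝ) :
    (w + x - (y + z)) ^ 2 ≤ 4 * (w ^ 2 + x ^ 2 + y ^ 2 + z ^ 2) := by
  nlinarith [sq_nonneg (w - x), sq_nonneg (w + y), sq_nonneg (w + z),
    sq_nonneg (x + y), sq_nonneg (x + z), sq_nonneg (y - z)]

/-- Cauchy–Schwarz for interval integrals of continuous functions. -/
lemma cs_lemma {f : ℝ → ℝ} (hf : Continuous f) {a b : ℝ} (hab : a ≤ b) :
    (∫ x in a..b, f x) ^ 2 ≤ (b - a) * ∫ x in a..b, f x ^ 2 := by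
  rcases eq_or_lt_of_le hab with rfl | hlt
  · simp
  · have hL : 0 < b - a := by linarith
    obtain ⟨c, hc⟩ : ∃ c : ℝ, c = (∫ x in a..b, f x) / (b - a) := ⟨_, rfl⟩
    have hint1 : IntervalIntegrable f volume a b := hf.intervalIntegrable a b
    have hint2 : IntervalIntegrable (fun x => f x ^ 2) volume a b :=
      (hf.pow 2).intervalIntegrable a b
    have h0 : 0 ≤ ∫ x in a..b, (f x - c) ^ 2 :=
      intervalIntegral.integral_nonneg hab (fun x _ => sq_nonneg _)
    have hexp : ∫ x in a..b, (f x - c) ^ 2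
        = (∫ x in a..b, f x ^ 2) - 2 * c * (∫ x in a..b, f x) + (b - a) * c ^ 2 := by
      have heq : ∀ x, (f x - c) ^ 2 = (f x ^ 2 - (2 * c) * f x) + c ^ 2 := by
        intro x; ring
      simp_rw [heq]
      rw [intervalIntegral.integral_add (hint2.sub (hint1.const_mul _))
          intervalIntegrable_const,
        intervalIntegral.integral_sub hint2 (hint1.const_mul _),
        intervalIntegral.integral_const_mul, intervalIntegral.integral_const,
        smul_eq_mul]
    rw [hexp] at h0
    have hcS : c * (b - a) = ∫ x in a..b, f x := by
      rw [hc]; field_simp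
    rw [← hcS] at h0 ⊢
    nlinarith [mul_nonneg hL.le h0, sq_nonneg c, mul_pos hL hL]

/-- The integral of the derivative of a periodic `C¹` function vanishes. -/
lemma integral_deriv_zero {f : ℝ → ℝ} (hf : ContDiff ℝ 1 f)
    (hper : f (-(1/2)) = f (1/2)) :
    (∫ y in (-(1/2) : ℝ)..(1/2), deriv f y) = 0 := by
  rw [intervalIntegral.integral_deriv_eq_sub
      (fun x _ => (hf.differentiable one_ne_zero).differentiableAt)
      ((hf.continuous_deriv le_rfl).intervalIntegrable _ _), hper]
  ring

/-- Pointwise Poincaré-type bound on `[-1/2, 1/2]`. -/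
lemma pointwise_sq_bound {f : ℝ → ℝ} (hf : ContDiff ℝ 1 f) {y : ℝ}
    (hy : y ∈ Set.Icc (-(1/2) : ℝ) (1/2)) :
    (f y - f 0) ^ 2 ≤ ∫ t in (-(1/2) : ℝ)..(1/2), (deriv f t) ^ 2 := by
  obtain ⟨hy1, hy2⟩ := hy
  have hc : Continuous (deriv f) := hf.continuous_deriv le_rfl
  have hc2 : Continuous (fun t => (deriv f t) ^ 2) := hc.pow 2
  have hftc : f y - f 0 = ∫ t in (0 : ℝ)..y, deriv f t := by
    rw [intervalIntegral.integral_deriv_eq_sub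
      (fun x _ => (hf.differentiable one_ne_zero).differentiableAt)
      (hc.intervalIntegrable _ _)]
  rcases le_total 0 y with h0y | hy0
  · have hcs : (∫ t in (0:ℝ)..y, deriv f t) ^ 2
        ≤ (y - 0) * ∫ t in (0:ℝ)..y, (deriv f t) ^ 2 := cs_lemma hc h0y
    have hsub : (∫ t in (0:ℝ)..y, (deriv f t) ^ 2)
        ≤ ∫ t in (-(1/2) : ℝ)..(1/2), (deriv f t) ^ 2 :=
      intervalIntegral.integral_mono_interval (by norm_num) h0y hy2
        (Filter.Eventually.of_forall fun x => sq_nonneg _)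
        (hc2.intervalIntegrable _ _)
    have hIpos : 0 ≤ ∫ t in (0:ℝ)..y, (deriv f t) ^ 2 :=
      intervalIntegral.integral_nonneg h0y fun x _ => sq_nonneg _
    rw [hftc]
    nlinarith [hcs, hsub, hIpos]
  · have hswap : (∫ t in (0:ℝ)..y, deriv f t) = -(∫ t in y..(0:ℝ), deriv f t) :=
      intervalIntegral.integral_symm _ _
    have hcs : (∫ t in y..(0:ℝ), deriv f t) ^ 2
        ≤ (0 - y) * ∫ t in y..(0:ℝ), (deriv f t) ^ 2 := cs_lemma hc hy0
    have hsub : (∫ t in y..(0:ℝ), (deriv f t) ^ 2)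
        ≤ ∫ t in (-(1/2) : ℝ)..(1/2), (deriv f t) ^ 2 :=
      intervalIntegral.integral_mono_interval hy1 hy0 (by norm_num)
        (Filter.Eventually.of_forall fun x => sq_nonneg _)
        (hc2.intervalIntegrable _ _)
    have hIpos : 0 ≤ ∫ t in y..(0:ℝ), (deriv f t) ^ 2 :=
      intervalIntegral.integral_nonneg hy0 fun x _ => sq_nonneg _
    rw [hftc, hswap]
    nlinarith [hcs, hsub, hIpos]

/-- The corrector with zero displacements and constant rotation `c`. -/
noncomputable def zeroCorrector (c : ℝ) : CrossCorrector where
  uh := 0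
  vh := 0
  th := fun _ => c
  uv := 0
  vv := 0
  tv := fun _ => c
  smooth_uh := contDiff_const
  smooth_vh := contDiff_const
  smooth_th := contDiff_const
  smooth_uv := contDiff_const
  smooth_vv := contDiff_const
  smooth_tv := contDiff_const
  per_uh := rfl
  per_vh := rfl
  per_th := rfl
  per_uv := rfl
  per_vv := rfl
  per_tv := rfl
  junc_disp1 := by simp
  junc_disp2 := rfl
  junc_rot := rfl

lemma crossEnergy_zeroCorrector (γ η κ : ℝ) (e : Matrix (Fin 2) (Fin 2) ℝ)
    (h00 : e 0 0 = 0) (h11 : e 1 1 = 0) (h01 : e 0 1 = -(e 1 0)) :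
    crossEnergy γ η κ e (zeroCorrector (e 1 0)) = 0 := by
  have hz : deriv (0 : ℝ → ℝ) = fun _ => 0 := by
    funext y; exact deriv_const y 0
  have hcd : deriv (fun _ : ℝ => e 1 0) = fun _ => 0 := by
    funext y; exact deriv_const y _
  unfold crossEnergy zeroCorrector
  simp only [hz, hcd, h00, h11, h01]
  norm_num

/-- The cell energy is nonnegative. -/
lemma crossEnergy_nonneg (γ η κ : ℝ) (hγ : 0 < γ) (hη : 0 < η) (hκ : 0 < κ)
    (e : Matrix (Fin 2) (Fin 2) ℝ) (N : CrossCorrector) :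
    0 ≤ crossEnergy γ η κ e N := by
  unfold crossEnergy
  have h1 : (0:ℝ) ≤ ∫ y in (-(1/2) : ℝ)..(1/2),
      (γ * (e 0 0 + deriv N.uh y) ^ 2 + η * (deriv N.th y) ^ 2
        + κ * (e 1 0 + deriv N.vh y - N.th y) ^ 2) :=
    intervalIntegral.integral_nonneg (by norm_num) fun x _ => by positivity
  have h2 : (0:ℝ) ≤ ∫ y in (-(1/2) : ℝ)..(1/2),
      (γ * (e 1 1 + deriv N.uv y) ^ 2 + η * (deriv N.tv y) ^ 2
        + κ * (-(e 0 1) + deriv N.vv y - N.tv y) ^ 2) :=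
    intervalIntegral.integral_nonneg (by norm_num) fun x _ => by positivity
  linarith

/-- Quantitative lower bound on the cell energy. -/
lemma crossEnergy_lower_bound (γ η κ : ℝ) (hγ : 0 < γ) (hη : 0 < η) (hκ : 0 < κ)
    (e : Matrix (Fin 2) (Fin 2) ℝ) (N : CrossCorrector) :
    γ * (e 0 0) ^ 2 + γ * (e 1 1) ^ 2
      + min η κ / 4 * (e 1 0 + e 0 1) ^ 2 ≤ crossEnergy γ η κ e N := by
  have hab : (-(1/2) : ℝ) ≤ 1/2 := by norm_num
  have hba : (1/2 : ℝ) - -(1/2) = 1 := by norm_num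
  have cuh : Continuous (deriv N.uh) := N.smooth_uh.continuous_deriv le_rfl
  have cvh : Continuous (deriv N.vh) := N.smooth_vh.continuous_deriv le_rfl
  have cth : Continuous (deriv N.th) := N.smooth_th.continuous_deriv le_rfl
  have cuv : Continuous (deriv N.uv) := N.smooth_uv.continuous_deriv le_rfl
  have cvv : Continuous (deriv N.vv) := N.smooth_vv.continuous_deriv le_rfl
  have ctv : Continuous (deriv N.tv) := N.smooth_tv.continuous_deriv le_rfl
  have cth0 : Continuous N.th := N.smooth_th.continuous
  have ctv0 : Continuous N.tv := N.smooth_tv.continuous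
  have cfh1 : Continuous (fun y => e 0 0 + deriv N.uh y) := continuous_const.add cuh
  have cfh3 : Continuous (fun y => e 1 0 + deriv N.vh y - N.th y) :=
    (continuous_const.add cvh).sub cth0
  have cfv1 : Continuous (fun y => e 1 1 + deriv N.uv y) := continuous_const.add cuv
  have cfv3 : Continuous (fun y => -(e 0 1) + deriv N.vv y - N.tv y) :=
    (continuous_const.add cvv).sub ctv0
  -- splitting of the energy
  have hsplit : crossEnergy γ η κ e N
      = γ * (∫ y in (-(1/2) : ℝ)..(1/2), (e 0 0 + deriv N.uh y) ^ 2)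
        + η * (∫ y in (-(1/2) : ℝ)..(1/2), (deriv N.th y) ^ 2)
        + κ * (∫ y in (-(1/2) : ℝ)..(1/2), (e 1 0 + deriv N.vh y - N.th y) ^ 2)
        + (γ * (∫ y in (-(1/2) : ℝ)..(1/2), (e 1 1 + deriv N.uv y) ^ 2)
          + η * (∫ y in (-(1/2) : ℝ)..(1/2), (deriv N.tv y) ^ 2)
          + κ * (∫ y in (-(1/2) : ℝ)..(1/2), (-(e 0 1) + deriv N.vv y - N.tv y) ^ 2)) := by
    unfold crossEnergy
    rw [intervalIntegral.integral_add
        (f := fun y => γ * (e 0 0 + deriv N.uh y) ^ 2 + η * (deriv N.th y) ^ 2)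
        (g := fun y => κ * (e 1 0 + deriv N.vh y - N.th y) ^ 2)
        (((continuous_const.mul (cfh1.pow 2)).add
          (continuous_const.mul (cth.pow 2))).intervalIntegrable _ _)
        ((continuous_const.mul (cfh3.pow 2)).intervalIntegrable _ _),
      intervalIntegral.integral_add
        (f := fun y => γ * (e 0 0 + deriv N.uh y) ^ 2) (g := fun y => η * (deriv N.th y) ^ 2)
        ((continuous_const.mul (cfh1.pow 2)).intervalIntegrable _ _)
        ((continuous_const.mul (cth.pow 2)).intervalIntegrable _ _),
      intervalIntegral.integral_add
        (f := fun y => γ * (e 1 1 + deriv N.uv y) ^ 2 + η * (deriv N.tv y) ^ 2)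
        (g := fun y => κ * (-(e 0 1) + deriv N.vv y - N.tv y) ^ 2)
        (((continuous_const.mul (cfv1.pow 2)).add
          (continuous_const.mul (ctv.pow 2))).intervalIntegrable _ _)
        ((continuous_const.mul (cfv3.pow 2)).intervalIntegrable _ _),
      intervalIntegral.integral_add
        (f := fun y => γ * (e 1 1 + deriv N.uv y) ^ 2) (g := fun y => η * (deriv N.tv y) ^ 2)
        ((continuous_const.mul (cfv1.pow 2)).intervalIntegrable _ _)
        ((continuous_const.mul (ctv.pow 2)).intervalIntegrable _ _),
      intervalIntegral.integral_const_mul, intervalIntegral.integral_const_mul,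
      intervalIntegral.integral_const_mul, intervalIntegral.integral_const_mul,
      intervalIntegral.integral_const_mul, intervalIntegral.integral_const_mul]
  -- nonnegativity of components
  have hBnn : 0 ≤ ∫ y in (-(1/2) : ℝ)..(1/2), (deriv N.th y) ^ 2 :=
    intervalIntegral.integral_nonneg hab fun x _ => sq_nonneg _
  have hCnn : 0 ≤ ∫ y in (-(1/2) : ℝ)..(1/2), (e 1 0 + deriv N.vh y - N.th y) ^ 2 :=
    intervalIntegral.integral_nonneg hab fun x _ => sq_nonneg _
  have hEnn : 0 ≤ ∫ y in (-(1/2) : ℝ)..(1/2), (deriv N.tv y) ^ 2 :=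
    intervalIntegral.integral_nonneg hab fun x _ => sq_nonneg _
  have hFnn : 0 ≤ ∫ y in (-(1/2) : ℝ)..(1/2), (-(e 0 1) + deriv N.vv y - N.tv y) ^ 2 :=
    intervalIntegral.integral_nonneg hab fun x _ => sq_nonneg _
  -- stretch bounds
  have hInt_uh : (∫ y in (-(1/2) : ℝ)..(1/2), (e 0 0 + deriv N.uh y)) = e 0 0 := by
    rw [intervalIntegral.integral_add intervalIntegrable_const
        (cuh.intervalIntegrable _ _), intervalIntegral.integral_const,
      integral_deriv_zero N.smooth_uh N.per_uh, smul_eq_mul]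
    norm_num
  have hbnd1 : (e 0 0) ^ 2 ≤ ∫ y in (-(1/2) : ℝ)..(1/2), (e 0 0 + deriv N.uh y) ^ 2 := by
    have h := cs_lemma cfh1 hab
    rw [hInt_uh, hba, one_mul] at h
    exact h
  have hInt_uv : (∫ y in (-(1/2) : ℝ)..(1/2), (e 1 1 + deriv N.uv y)) = e 1 1 := by
    rw [intervalIntegral.integral_add intervalIntegrable_const
        (cuv.intervalIntegrable _ _), intervalIntegral.integral_const,
      integral_deriv_zero N.smooth_uv N.per_uv, smul_eq_mul]
    norm_num
  have hbnd2 : (e 1 1) ^ 2 ≤ ∫ y in (-(1/2) : ℝ)..(1/2), (e 1 1 + deriv N.uv y) ^ 2 := by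
    have h := cs_lemma cfv1 hab
    rw [hInt_uv, hba, one_mul] at h
    exact h
  -- horizontal shear
  have hInt_h3 : (∫ y in (-(1/2) : ℝ)..(1/2), (e 1 0 + deriv N.vh y - N.th y))
      = e 1 0 - ∫ y in (-(1/2) : ℝ)..(1/2), N.th y := by
    rw [intervalIntegral.integral_sub
        (intervalIntegrable_const.add (cvh.intervalIntegrable _ _))
        (cth0.intervalIntegrable _ _),
      intervalIntegral.integral_add intervalIntegrable_const
        (cvh.intervalIntegrable _ _), intervalIntegral.integral_const,
      integral_deriv_zero N.smooth_vh N.per_vh, smul_eq_mul]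
    norm_num
  have hx2 : (e 1 0 - ∫ y in (-(1/2) : ℝ)..(1/2), N.th y) ^ 2
      ≤ ∫ y in (-(1/2) : ℝ)..(1/2), (e 1 0 + deriv N.vh y - N.th y) ^ 2 := by
    have h := cs_lemma cfh3 hab
    rw [hInt_h3, hba, one_mul] at h
    exact h
  have hInt_thc : (∫ y in (-(1/2) : ℝ)..(1/2), (N.th y - N.th 0))
      = (∫ y in (-(1/2) : ℝ)..(1/2), N.th y) - N.th 0 := by
    rw [intervalIntegral.integral_sub (cth0.intervalIntegrable _ _)
        intervalIntegrable_const, intervalIntegral.integral_const, smul_eq_mul]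
    norm_num
  have hy2 : ((∫ y in (-(1/2) : ℝ)..(1/2), N.th y) - N.th 0) ^ 2
      ≤ ∫ y in (-(1/2) : ℝ)..(1/2), (deriv N.th y) ^ 2 := by
    have h := cs_lemma (f := fun y => N.th y - N.th 0) (cth0.sub continuous_const) hab
    rw [hInt_thc, hba, one_mul] at h
    have hmono : (∫ y in (-(1/2) : ℝ)..(1/2), (N.th y - N.th 0) ^ 2)
        ≤ ∫ _y in (-(1/2) : ℝ)..(1/2),
            (∫ t in (-(1/2) : ℝ)..(1/2), (deriv N.th t) ^ 2) := by
      apply intervalIntegral.integral_mono_on hab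
        (((cth0.sub continuous_const).pow 2).intervalIntegrable _ _)
        intervalIntegrable_const
      intro x hx'
      exact pointwise_sq_bound N.smooth_th hx'
    rw [intervalIntegral.integral_const, smul_eq_mul, hba, one_mul] at hmono
    linarith
  -- vertical shear
  have hInt_v3 : (∫ y in (-(1/2) : ℝ)..(1/2), (-(e 0 1) + deriv N.vv y - N.tv y))
      = -(e 0 1) - ∫ y in (-(1/2) : ℝ)..(1/2), N.tv y := by
    rw [intervalIntegral.integral_sub
        (intervalIntegrable_const.add (cvv.intervalIntegrable _ _))
        (ctv0.intervalIntegrable _ _),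
      intervalIntegral.integral_add intervalIntegrable_const
        (cvv.intervalIntegrable _ _), intervalIntegral.integral_const,
      integral_deriv_zero N.smooth_vv N.per_vv, smul_eq_mul]
    norm_num
  have hx2' : (-(e 0 1) - ∫ y in (-(1/2) : ℝ)..(1/2), N.tv y) ^ 2
      ≤ ∫ y in (-(1/2) : ℝ)..(1/2), (-(e 0 1) + deriv N.vv y - N.tv y) ^ 2 := by
    have h := cs_lemma cfv3 hab
    rw [hInt_v3, hba, one_mul] at h
    exact h
  have hInt_tvc : (∫ y in (-(1/2) : ℝ)..(1/2), (N.tv y - N.tv 0))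
      = (∫ y in (-(1/2) : ℝ)..(1/2), N.tv y) - N.tv 0 := by
    rw [intervalIntegral.integral_sub (ctv0.intervalIntegrable _ _)
        intervalIntegrable_const, intervalIntegral.integral_const, smul_eq_mul]
    norm_num
  have hy2' : ((∫ y in (-(1/2) : ℝ)..(1/2), N.tv y) - N.tv 0) ^ 2
      ≤ ∫ y in (-(1/2) : ℝ)..(1/2), (deriv N.tv y) ^ 2 := by
    have h := cs_lemma (f := fun y => N.tv y - N.tv 0) (ctv0.sub continuous_const) hab
    rw [hInt_tvc, hba, one_mul] at h
    have hmono : (∫ y in (-(1/2) : ℝ)..(1/2), (N.tv y - N.tv 0) ^ 2)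
        ≤ ∫ _y in (-(1/2) : ℝ)..(1/2),
            (∫ t in (-(1/2) : ℝ)..(1/2), (deriv N.tv t) ^ 2) := by
      apply intervalIntegral.integral_mono_on hab
        (((ctv0.sub continuous_const).pow 2).intervalIntegrable _ _)
        intervalIntegrable_const
      intro x hx'
      exact pointwise_sq_bound N.smooth_tv hx'
    rw [intervalIntegral.integral_const, smul_eq_mul, hba, one_mul] at hmono
    linarith
  -- abstract the integrals and finish by arithmetic
  obtain ⟨A, hA⟩ : ∃ r : ℝ, r = ∫ y in (-(1/2) : ℝ)..(1/2), (e 0 0 + deriv N.uh y) ^ 2 := ⟨_, rfl⟩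
  obtain ⟨B, hB⟩ : ∃ r : ℝ, r = ∫ y in (-(1/2) : ℝ)..(1/2), (deriv N.th y) ^ 2 := ⟨_, rfl⟩
  obtain ⟨C, hC⟩ : ∃ r : ℝ, r = ∫ y in (-(1/2) : ℝ)..(1/2), (e 1 0 + deriv N.vh y - N.th y) ^ 2 := ⟨_, rfl⟩
  obtain ⟨D, hD⟩ : ∃ r : ℝ, r = ∫ y in (-(1/2) : ℝ)..(1/2), (e 1 1 + deriv N.uv y) ^ 2 := ⟨_, rfl⟩
  obtain ⟨E2, hE2⟩ : ∃ r : ℝ, r = ∫ y in (-(1/2) : ℝ)..(1/2), (deriv N.tv y) ^ 2 := ⟨_, rfl⟩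
  obtain ⟨F2, hF2⟩ : ∃ r : ℝ, r = ∫ y in (-(1/2) : ℝ)..(1/2), (-(e 0 1) + deriv N.vv y - N.tv y) ^ 2 := ⟨_, rfl⟩
  obtain ⟨Th, hTh⟩ : ∃ r : ℝ, r = ∫ y in (-(1/2) : ℝ)..(1/2), N.th y := ⟨_, rfl⟩
  obtain ⟨Tv, hTv⟩ : ∃ r : ℝ, r = ∫ y in (-(1/2) : ℝ)..(1/2), N.tv y := ⟨_, rfl⟩
  rw [← hA, ← hB, ← hC, ← hD, ← hE2, ← hF2] at hsplit
  rw [← hB] at hBnn hy2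
  rw [← hC] at hCnn hx2
  rw [← hE2] at hEnn hy2'
  rw [← hF2] at hFnn hx2'
  rw [← hA] at hbnd1
  rw [← hD] at hbnd2
  rw [← hTh] at hx2 hy2
  rw [← hTv] at hx2' hy2'
  rw [hsplit]
  have hkey : (e 1 0 + e 0 1) ^ 2 ≤ 4 * (B + C + E2 + F2) := by
    have hid : e 1 0 + e 0 1
        = (e 1 0 - Th) + (Th - N.th 0) - ((-(e 0 1) - Tv) + (Tv - N.tv 0)) := by
      rw [N.junc_rot]; ring
    rw [hid]
    have h := four_sq_bound (e 1 0 - Th) (Th - N.th 0) (-(e 0 1) - Tv) (Tv - N.tv 0)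
    linarith only [h, hx2, hy2, hx2', hy2']
  have hμη : min η κ ≤ η := min_le_left _ _
  have hμκ : min η κ ≤ κ := min_le_right _ _
  have h1 := mul_le_mul_of_nonneg_left hkey
    (by positivity : (0:ℝ) ≤ min η κ / 4)
  have h2 := mul_le_mul_of_nonneg_right hμη hBnn
  have h3 := mul_le_mul_of_nonneg_right hμκ hCnn
  have h4 := mul_le_mul_of_nonneg_right hμη hEnn
  have h5 := mul_le_mul_of_nonneg_right hμκ hFnn
  have hg1 := mul_le_mul_of_nonneg_left hbnd1 hγ.le
  have hg2 := mul_le_mul_of_nonneg_left hbnd2 hγ.le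
  linarith only [h1, h2, h3, h4, h5, hg1, hg2]

/-- `E(e) = 0` iff `e` is antisymmetric; and for antisymmetric `e` the minimum
is attained by `N_u ≡ N_v ≡ 0` and `N_θ = e_{jl}n_jτ_l` constant on `Γ₁`
(this common constant being `e 1 0` on both segments). -/
theorem stmt_18 (γ η κ : ℝ) (hγ : 0 < γ) (hη : 0 < η) (hκ : 0 < κ) :
    ∀ e : Matrix (Fin 2) (Fin 2) ℝ,
      (homEnergy γ η κ e = 0 ↔ e.transpose = -e) ∧
      (e.transpose = -e → ∃ N : CrossCorrector,
        N.uh = 0 ∧ N.vh = 0 ∧ N.uv = 0 ∧ N.vv = 0 ∧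
        N.th = (fun _ => e 1 0) ∧ N.tv = (fun _ => e 1 0) ∧
        crossEnergy γ η κ e N = 0) := by
  intro e
  have hSne : {r : ℝ | ∃ N : CrossCorrector, r = crossEnergy γ η κ e N}.Nonempty :=
    ⟨crossEnergy γ η κ e (zeroCorrector (e 1 0)), zeroCorrector (e 1 0), rfl⟩
  have hSbdd : BddBelow {r : ℝ | ∃ N : CrossCorrector, r = crossEnergy γ η κ e N} := by
    refine ⟨0, ?_⟩
    rintro r ⟨N, rfl⟩
    exact crossEnergy_nonneg γ η κ hγ hη hκ e N
  have hanti_comp : e.transpose = -e → e 0 0 = 0 ∧ e 1 1 = 0 ∧ e 0 1 = -(e 1 0) := by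
    intro hanti
    refine ⟨?_, ?_, ?_⟩
    · have := congrFun (congrFun hanti 0) 0
      simp [Matrix.transpose_apply, Matrix.neg_apply] at this
      linarith
    · have := congrFun (congrFun hanti 1) 1
      simp [Matrix.transpose_apply, Matrix.neg_apply] at this
      linarith
    · have := congrFun (congrFun hanti 1) 0
      simp [Matrix.transpose_apply, Matrix.neg_apply] at this
      linarith
  constructor
  · constructor
    · -- homEnergy = 0 → antisymmetric
      intro h0
      have hlb : γ * (e 0 0) ^ 2 + γ * (e 1 1) ^ 2
          + min η κ / 4 * (e 1 0 + e 0 1) ^ 2 ≤ homEnergy γ η κ e := by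
        apply le_csInf hSne
        rintro r ⟨N, rfl⟩
        exact crossEnergy_lower_bound γ η κ hγ hη hκ e N
      rw [h0] at hlb
      have hμ0 : 0 < min η κ / 4 := by positivity
      have hq1 : 0 ≤ γ * (e 0 0) ^ 2 := by positivity
      have hq2 : 0 ≤ γ * (e 1 1) ^ 2 := by positivity
      have hq3 : 0 ≤ min η κ / 4 * (e 1 0 + e 0 1) ^ 2 := by positivity
      have h00 : e 0 0 = 0 := by
        have : γ * (e 0 0) ^ 2 = 0 := by linarith
        have h2 : (e 0 0) ^ 2 = 0 := by
          rcases mul_eq_zero.mp this with h | h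
          · exact absurd h hγ.ne'
          · exact h
        exact sq_eq_zero_iff.mp h2
      have h11 : e 1 1 = 0 := by
        have : γ * (e 1 1) ^ 2 = 0 := by linarith
        have h2 : (e 1 1) ^ 2 = 0 := by
          rcases mul_eq_zero.mp this with h | h
          · exact absurd h hγ.ne'
          · exact h
        exact sq_eq_zero_iff.mp h2
      have hsum : e 1 0 + e 0 1 = 0 := by
        have : min η κ / 4 * (e 1 0 + e 0 1) ^ 2 = 0 := by linarith
        have h2 : (e 1 0 + e 0 1) ^ 2 = 0 := by
          rcases mul_eq_zero.mp this with h | h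
          · exact absurd h hμ0.ne'
          · exact h
        exact sq_eq_zero_iff.mp h2
      ext i j
      fin_cases i <;> fin_cases j <;>
        simp [Matrix.transpose_apply, Matrix.neg_apply] <;> linarith
    · -- antisymmetric → homEnergy = 0
      intro hanti
      obtain ⟨h00, h11, h01⟩ := hanti_comp hanti
      have hmem : (0:ℝ) ∈ {r : ℝ | ∃ N : CrossCorrector, r = crossEnergy γ η κ e N} :=
        ⟨zeroCorrector (e 1 0), (crossEnergy_zeroCorrector γ η κ e h00 h11 h01).symm⟩
      apply le_antisymm
      · exact csInf_le hSbdd hmem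
      · apply le_csInf hSne
        rintro r ⟨N, rfl⟩
        exact crossEnergy_nonneg γ η κ hγ hη hκ e N
  · intro hanti
    obtain ⟨h00, h11, h01⟩ := hanti_comp hanti
    exact ⟨zeroCorrector (e 1 0), rfl, rfl, rfl, rfl, rfl, rfl,
      crossEnergy_zeroCorrector γ η κ e h00 h11 h01⟩
end
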